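/- In dimension d = 2, the minimum of two affine (hence convex) functions can fail to be convex: there exist w₁, w₂ ∈ ℝ² and affine functions h₁, h₂ : ℝ² → ℝ such that min{h₁, h₂}(½w₁ + ½w₂) > ½ min{h₁,h₂}(w₁) + ½ min{h₁,h₂}(w₂). Consequently, for FPR ranges [α,β] with ⌊nα⌋ > 0 there exists a training sample on which the hinge-loss partial AUC surrogate R̂^hinge_{pAUC(α,β)}(w;S) = (1/(m(j_β−j_α))) Σ_i Σ_{j=j_α+1}^{j_β} (1 − wᵀ(x⁺_i − x⁻_{(j)_w}))₊ is non-convex in w, where x⁻_{(j)_w} is the j-th highest-scored negative under w. -/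

import Mathlib

/-- Dot product of vectors in ℝ^d. -/
noncomputable def dot {d : ℕ} (w x : Fin d → ℝ) : ℝ := ∑ l, w l * x l

/-- The j-th largest (1-indexed) of the n negative scores wᵀx⁻_l. -/
noncomputable def kthScore {n d : ℕ} (w : Fin d → ℝ) (xn : Fin n → Fin d → ℝ) (j : ℕ) : ℝ :=
  (((Finset.univ : Finset (Fin n)).val.map fun l => dot w (xn l)).sort (· ≤ ·)).getD (n - j) 0

/-- The hinge partial AUC surrogate
R̂^hinge_{pAUC}(w) = (1/(m(j_β−j_α))) Σ_i Σ_{j=j_α+1}^{j_β} (1 − (wᵀx⁺_i − wᵀx⁻_{(j)_w}))₊,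
where x⁻_{(j)_w} is the j-th highest-scored negative under w (only its score matters). -/
noncomputable def hingeSurr {m n d : ℕ} (xp : Fin m → Fin d → ℝ) (xn : Fin n → Fin d → ℝ)
    (ja jb : ℕ) (w : Fin d → ℝ) : ℝ :=
  (1 / ((m : ℝ) * ((jb : ℝ) - (ja : ℝ)))) *
    ∑ i, ∑ j ∈ Finset.Icc (ja + 1) jb, max (1 - (dot w (xp i) - kthScore w xn j)) 0

lemma sort_coe (l : List ℝ) (h : l.Pairwise (· ≤ ·)) :
    Multiset.sort (l : Multiset ℝ) (· ≤ ·) = l :=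
  List.Perm.eq_of_pairwise' (Multiset.pairwise_sort _ _) h
    (Multiset.coe_eq_coe.mp (Multiset.sort_eq _ _))

lemma ofFn_eq (a b : ℕ) (r c d t : ℝ) :
    List.ofFn (fun l : Fin (a + 2 + b) =>
      if (l : ℕ) < a then r else if (l : ℕ) = a then c else if (l : ℕ) = a + 1 then d else t)
    = List.replicate a r ++ c :: d :: List.replicate b t := by
  apply List.ext_getElem
  · simp; omega
  · intro i h1 h2
    simp only [List.getElem_ofFn]
    rcases lt_trichotomy i a with hi | hi | hi
    · rw [List.getElem_append_left (by simpa using hi)]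
      simp [hi]
    · subst hi
      rw [List.getElem_append_right (by simp)]
      simp
    · rw [List.getElem_append_right (by simp; omega)]
      simp only [List.length_replicate, List.getElem_cons]
      simp [show ¬ i < a by omega, show i ≠ a by omega,
        show ¬ i - a = 0 by omega]
      rcases Nat.eq_or_lt_of_le (show a + 1 ≤ i by omega) with h'' | h''
      · simp [← h'', show i - a - 1 = 0 by omega]
      · simp [show ¬ i - a - 1 = 0 by omega, show i ≠ a + 1 by omega, List.getElem_cons]

lemma sorted_L (a b : ℕ) (r c d t : ℝ) (h1 : r ≤ c) (h2 : c ≤ d) (h3 : d ≤ t) :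
    (List.replicate a r ++ c :: d :: List.replicate b t).Pairwise (· ≤ ·) := by
  rw [List.pairwise_append]
  refine ⟨List.pairwise_replicate.mpr (Or.inr le_rfl), ?_, ?_⟩
  · rw [List.pairwise_cons]
    refine ⟨?_, ?_⟩
    · intro x hx
      rw [List.mem_cons] at hx
      rcases hx with rfl | hx
      · exact h2
      · rw [List.mem_replicate] at hx; rw [hx.2]; linarith
    · rw [List.pairwise_cons]
      refine ⟨?_, List.pairwise_replicate.mpr (Or.inr le_rfl)⟩
      intro x hx; rw [List.mem_replicate] at hx; rw [hx.2]; linarith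
  · intro x hx y hy
    rw [List.mem_replicate] at hx
    rw [List.mem_cons, List.mem_cons] at hy
    rcases hy with rfl | rfl | hy
    · rw [hx.2]; linarith
    · rw [hx.2]; linarith
    · rw [List.mem_replicate] at hy; rw [hx.2, hy.2]; linarith

lemma getD_mid (a b : ℕ) (r c d t : ℝ) :
    (List.replicate a r ++ c :: d :: List.replicate b t).getD a 0 = c := by
  rw [List.getD_eq_getElem _ _ (by simp)]
  rw [List.getElem_append_right (by simp)]
  simp

lemma getD_left (a b i : ℕ) (hi : i < a) (r c d t : ℝ) :
    (List.replicate a r ++ c :: d :: List.replicate b t).getD i 0 = r := by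
  rw [List.getD_eq_getElem _ _ (by simp; omega)]
  rw [List.getElem_append_left (by simpa using hi)]
  simp

lemma kth_eq (n a b : ℕ) (hn : n = a + 2 + b) (w : Fin 2 → ℝ) (xn : Fin n → Fin 2 → ℝ)
    (r c d t : ℝ)
    (hf : ∀ l : Fin n, dot w (xn l) =
      if (l : ℕ) < a then r else if (l : ℕ) = a then c else if (l : ℕ) = a + 1 then d else t)
    (h1 : r ≤ c) (h2 : r ≤ d) (h3 : c ≤ t) (h4 : d ≤ t) (j : ℕ) :
    kthScore w xn j
      = (List.replicate a r ++ min c d :: max c d :: List.replicate b t).getD (n - j) 0 := by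
  subst hn
  unfold kthScore
  rw [Fin.univ_val_map, show (fun l : Fin (a + 2 + b) => dot w (xn l)) = fun l : Fin (a + 2 + b) =>
      if (l : ℕ) < a then r else if (l : ℕ) = a then c else if (l : ℕ) = a + 1 then d else t
    from funext hf]
  rw [ofFn_eq]
  have hperm : ((List.replicate a r ++ c :: d :: List.replicate b t : List ℝ) : Multiset ℝ)
      = ((List.replicate a r ++ min c d :: max c d :: List.replicate b t : List ℝ) : Multiset ℝ) := by
    rcases le_total c d with h | h
    · rw [min_eq_left h, max_eq_right h]
    · rw [min_eq_right h, max_eq_left h]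
      exact Multiset.coe_eq_coe.mpr (List.Perm.append_left _ (List.Perm.swap d c _))
  rw [hperm, sort_coe _ (sorted_L a b r (min c d) (max c d) t
    (le_min h1 h2) min_le_max (max_le h3 h4))]

theorem stmt4 :
    (∃ (w₁ w₂ : Fin 2 → ℝ) (h₁ h₂ : (Fin 2 → ℝ) → ℝ),
      (∃ a b, ∀ w, h₁ w = dot w a + b) ∧ (∃ a b, ∀ w, h₂ w = dot w a + b) ∧
      (1 / 2 : ℝ) * min (h₁ w₁) (h₂ w₁) + (1 / 2 : ℝ) * min (h₁ w₂) (h₂ w₂)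
        < min (h₁ ((1 / 2 : ℝ) • w₁ + (1 / 2 : ℝ) • w₂))
            (h₂ ((1 / 2 : ℝ) • w₁ + (1 / 2 : ℝ) • w₂))) ∧
    (∀ n ja jb : ℕ, 0 < ja → ja < jb → jb ≤ n →
      ∃ (m : ℕ) (xp : Fin m → Fin 2 → ℝ) (xn : Fin n → Fin 2 → ℝ),
        ¬ ConvexOn ℝ Set.univ (hingeSurr xp xn ja jb)) := by
  have hmid : ((1 / 2 : ℝ) • (![1, 0] : Fin 2 → ℝ) + (1 / 2 : ℝ) • (![0, 1] : Fin 2 → ℝ))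
      = ![1/2, 1/2] := by
    funext l
    fin_cases l <;> simp
  constructor
  · refine ⟨![1, 0], ![0, 1], fun w => dot w ![1, 0], fun w => dot w ![0, 1],
      ⟨![1, 0], 0, fun w => by ring⟩, ⟨![0, 1], 0, fun w => by ring⟩, ?_⟩
    rw [hmid]
    simp [dot, Fin.sum_univ_two]
  · intro n ja jb hja hab hbn
    set a := n - ja - 1 with ha
    set b := ja - 1 with hb
    have hn : n = a + 2 + b := by omega
    refine ⟨1, fun _ => 0, fun l =>
      if (l : ℕ) < a then ![-10, -10] else if (l : ℕ) = a then ![0, 1]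
        else if (l : ℕ) = a + 1 then ![1, 0] else ![10, 10], ?_⟩
    intro hconv
    set xn : Fin n → Fin 2 → ℝ := fun l =>
      if (l : ℕ) < a then ![-10, -10] else if (l : ℕ) = a then ![0, 1]
        else if (l : ℕ) = a + 1 then ![1, 0] else ![10, 10] with hxn
    -- kthScore evaluations
    have mkK : ∀ (w : Fin 2 → ℝ) (c d : ℝ), -10 ≤ c → -10 ≤ d → c ≤ 10 → d ≤ 10 →
        (∀ l : Fin n, dot w (xn l) = if (l : ℕ) < a then -10 else if (l : ℕ) = a then c
          else if (l : ℕ) = a + 1 then d else 10) →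
        ∀ j, kthScore w xn j
          = (List.replicate a (-10 : ℝ) ++ min c d :: max c d :: List.replicate b 10).getD (n - j) 0 :=
      fun w c d h1 h2 h3 h4 hf j => kth_eq n a b hn w xn (-10) c d 10 hf h1 h2 h3 h4 j
    -- the surrogate value as a function of the score u in the critical slot
    have hsum : ∀ (w : Fin 2 → ℝ) (u v : ℝ),
        (∀ j, kthScore w xn j
          = (List.replicate a (-10 : ℝ) ++ u :: v :: List.replicate b 10).getD (n - j) 0) →
        hingeSurr (fun _ : Fin 1 => (0 : Fin 2 → ℝ)) xn ja jb w
          = (1 / ((1 : ℝ) * ((jb : ℝ) - (ja : ℝ)))) * max (1 + u) 0 := by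
      intro w u v hk
      unfold hingeSurr
      rw [Fin.sum_univ_one]
      have hd0 : dot w ((fun _ : Fin 1 => (0 : Fin 2 → ℝ)) 0) = 0 := by simp [dot]
      rw [Finset.sum_eq_single_of_mem (ja + 1) (Finset.mem_Icc.mpr ⟨le_rfl, by omega⟩)]
      · rw [hk, show n - (ja + 1) = a by omega, getD_mid, hd0, Nat.cast_one,
          show (1 : ℝ) - (0 - u) = 1 + u by ring]
      · intro j hj hne
        rw [Finset.mem_Icc] at hj
        rw [hk, getD_left a b _ (by omega), hd0]
        norm_num
    have hC : (0 : ℝ) < (jb : ℝ) - (ja : ℝ) := sub_pos.mpr (Nat.cast_lt.mpr hab)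
    have hf1 : hingeSurr (fun _ : Fin 1 => (0 : Fin 2 → ℝ)) xn ja jb ![1, 0]
        = (1 / ((1 : ℝ) * ((jb : ℝ) - (ja : ℝ)))) * 1 := by
      rw [hsum ![1, 0] 0 1 (by
        have := mkK ![1, 0] 0 1 (by norm_num) (by norm_num) (by norm_num) (by norm_num) (by
          intro l
          by_cases hl1 : (l : ℕ) < a <;> by_cases hl2 : (l : ℕ) = a <;>
            by_cases hl3 : (l : ℕ) = a + 1 <;>
            simp [hxn, hl1, hl2, hl3, dot, Fin.sum_univ_two])
        rwa [show min (0 : ℝ) 1 = 0 by norm_num, show max (0 : ℝ) 1 = 1 by norm_num] at this)]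
      norm_num
    have hf2 : hingeSurr (fun _ : Fin 1 => (0 : Fin 2 → ℝ)) xn ja jb ![0, 1]
        = (1 / ((1 : ℝ) * ((jb : ℝ) - (ja : ℝ)))) * 1 := by
      rw [hsum ![0, 1] 0 1 (by
        have := mkK ![0, 1] 1 0 (by norm_num) (by norm_num) (by norm_num) (by norm_num) (by
          intro l
          by_cases hl1 : (l : ℕ) < a <;> by_cases hl2 : (l : ℕ) = a <;>
            by_cases hl3 : (l : ℕ) = a + 1 <;>
            simp [hxn, hl1, hl2, hl3, dot, Fin.sum_univ_two])
        rwa [show min (1 : ℝ) 0 = 0 by norm_num, show max (1 : ℝ) 0 = 1 by norm_num] at this)]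
      norm_num
    have hf3 : hingeSurr (fun _ : Fin 1 => (0 : Fin 2 → ℝ)) xn ja jb ![1/2, 1/2]
        = (1 / ((1 : ℝ) * ((jb : ℝ) - (ja : ℝ)))) * (3 / 2) := by
      rw [hsum ![1/2, 1/2] (1/2) (1/2) (by
        have := mkK ![1/2, 1/2] (1/2) (1/2) (by norm_num) (by norm_num) (by norm_num) (by norm_num) (by
          intro l
          by_cases hl1 : (l : ℕ) < a <;> by_cases hl2 : (l : ℕ) = a <;>
            by_cases hl3 : (l : ℕ) = a + 1 <;>
            simp [hxn, hl1, hl2, hl3, dot, Fin.sum_univ_two] <;> norm_num)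
        rwa [min_self, max_self] at this)]
      norm_num
    have hineq := hconv.2 (Set.mem_univ (![1, 0] : Fin 2 → ℝ))
      (Set.mem_univ (![0, 1] : Fin 2 → ℝ)) (by norm_num : (0:ℝ) ≤ 1/2)
      (by norm_num : (0:ℝ) ≤ 1/2) (by norm_num : (1/2 : ℝ) + 1/2 = 1)
    rw [hmid, hf1, hf2, hf3] at hineq
    rw [one_mul] at hineq
    simp only [smul_eq_mul] at hineq
    have hpos : (0 : ℝ) < 1 / ((jb : ℝ) - (ja : ℝ)) := by positivity
    nlinarith [hineq, hpos]
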